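/- Let δ > 0, k > 0, K ≥ 0, set t_n = n·k, and let E^0, E^1, …, E^N be nonnegative real numbers satisfying, for every 1 ≤ n ≤ N, (E^n − E^{n−1})/k + 2·((e^{δk} − 1)/k)·E^n ≤ K. Then for every 1 ≤ n ≤ N, E^n ≤ e^{−δ t_n}·E^0 + (k/(e^{δk} − 1))·K; in particular E^n ≤ e^{−δ t_n}·E^0 + K/δ. -/

import Mathlib

/-- Discrete exponential-decay lemma: a nonnegative sequence whose backward
difference quotient satisfies a damped inequality with damping coefficient
`2 (e^{δk} − 1)/k` decays exponentially up to a constant. -/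
theorem discrete_exponential_decay
    (δ k K : ℝ) (hδ : 0 < δ) (hk : 0 < k) (hK : 0 ≤ K)
    (N : ℕ) (E : ℕ → ℝ) (hE : ∀ n, 0 ≤ E n)
    (hyp : ∀ n : ℕ, 1 ≤ n → n ≤ N →
      (E n - E (n - 1)) / k + 2 * ((Real.exp (δ * k) - 1) / k) * E n ≤ K) :
    ∀ n : ℕ, 1 ≤ n → n ≤ N →
      E n ≤ Real.exp (-δ * ((n : ℝ) * k)) * E 0 + (k / (Real.exp (δ * k) - 1)) * K ∧
      E n ≤ Real.exp (-δ * ((n : ℝ) * k)) * E 0 + K / δ := by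
  have hdk : 0 < δ * k := mul_pos hδ hk
  set a := Real.exp (δ * k) - 1 with ha_def
  have hage : δ * k ≤ a := by
    have := Real.add_one_le_exp (δ * k)
    simp only [ha_def]; linarith
  have ha : 0 < a := lt_of_lt_of_le hdk hage
  set c := Real.exp (-(δ * k)) with hc_def
  have hcpos : 0 < c := Real.exp_pos _
  have hc1 : c * (1 + a) = 1 := by
    rw [hc_def, ha_def, Real.exp_neg]
    have := Real.exp_pos (δ * k)
    field_simp
    ring
  have key : ∀ n : ℕ, n ≤ N → E n ≤ c ^ n * E 0 + (k / a) * K := by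
    intro n
    induction n with
    | zero =>
      intro _
      have : 0 ≤ (k / a) * K := mul_nonneg (le_of_lt (div_pos hk ha)) hK
      simp; linarith
    | succ n ih =>
      intro hn
      have ih' := ih (Nat.le_of_succ_le hn)
      have h := hyp (n + 1) (Nat.succ_le_succ (Nat.zero_le n)) hn
      simp only [Nat.add_sub_cancel] at h
      have heq : (E (n + 1) - E n) / k + 2 * (a / k) * E (n + 1)
          = (E (n + 1) * (1 + 2 * a) - E n) / k := by
        field_simp; ring
      rw [heq, div_le_iff₀ hk] at h
      have h1' : E (n + 1) * (1 + a) ≤ E n + k * K := by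
        nlinarith [mul_nonneg ha.le (hE (n + 1))]
      have h2 : E (n + 1) ≤ c * (E n + k * K) := by
        calc E (n + 1) = c * (E (n + 1) * (1 + a)) := by
              rw [show c * (E (n + 1) * (1 + a)) = c * (1 + a) * E (n + 1) by ring, hc1, one_mul]
          _ ≤ c * (E n + k * K) := mul_le_mul_of_nonneg_left h1' hcpos.le
      have h3 : c * ((k / a) * K + k * K) = (k / a) * K := by
        have : c * ((k / a) * K + k * K) = (k / a) * K * (c * (1 + a)) := by
          field_simp
        rw [this, hc1, mul_one]
      calc E (n + 1) ≤ c * (E n + k * K) := h2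
        _ ≤ c * ((c ^ n * E 0 + (k / a) * K) + k * K) := by
            apply mul_le_mul_of_nonneg_left _ hcpos.le; linarith
        _ = c ^ (n + 1) * E 0 + c * ((k / a) * K + k * K) := by ring
        _ = c ^ (n + 1) * E 0 + (k / a) * K := by rw [h3]
  intro n hn1 hnN
  have hexp : c ^ n = Real.exp (-δ * ((n : ℝ) * k)) := by
    rw [hc_def, ← Real.exp_nat_mul]
    congr 1; ring
  have hmain := key n hnN
  rw [hexp] at hmain
  refine ⟨hmain, hmain.trans ?_⟩
  have hdiv : k / a ≤ 1 / δ := by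
    rw [div_le_div_iff₀ ha hδ]
    nlinarith
  have : (k / a) * K ≤ K / δ := by
    rw [div_eq_mul_inv K δ, mul_comm K]
    calc (k / a) * K ≤ (1 / δ) * K := mul_le_mul_of_nonneg_right hdiv hK
      _ = δ⁻¹ * K := by rw [one_div]
  linarith
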